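/- Suppose π : X → X_p is distance nonincreasing, σ : X_p → X is an isometric section of π, and φ : X → X is a (K,C)-quasi-isometry such that there is a constant A with: for every x ∈ X_p there exists y ∈ X_p with Hd(φ(π⁻¹(x)), π⁻¹(y)) ≤ A, and moreover Hd(π⁻¹(x),π⁻¹(y)) = d(x,y) for all x,y ∈ X_p. Then φ_π := π ∘ φ ∘ σ : X_p → X_p is a (K, 4KA + KC)-quasi-isometric embedding of X_p. -/

import Mathlib

lemma my_le_infDist {X : Type*} [MetricSpace X] {s : Set X} {x : X} {r : ℝ}
    (hs : s.Nonempty) (h : ∀ y ∈ s, r ≤ dist x y) : r ≤ Metric.infDist x s := by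
  by_contra hlt
  push_neg at hlt
  obtain ⟨y, hy, hd⟩ := (Metric.infDist_lt_iff hs).1 hlt
  exact absurd hd (not_lt.2 (h y hy))

/-- if `π : X → X_p` is distance nonincreasing with isometric section
`σ`, the Hausdorff distance between fibers equals the base distance, and
`φ : X → X` is a `(K,C)`-quasi-isometry mapping each fiber within Hausdorff distance
`A` of some fiber, then `φ_π = π ∘ φ ∘ σ` is a `(K, 4KA + KC)`-quasi-isometric
embedding of `X_p`. -/
theorem induced_base_map_is_QIE
    {X Xp : Type*} [MetricSpace X] [MetricSpace Xp]
    (π : X → Xp) (σ : Xp → X)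
    (hπ : ∀ a b : X, dist (π a) (π b) ≤ dist a b)
    (hσ : Isometry σ) (hsec : ∀ x : Xp, π (σ x) = x)
    (K C A : ℝ) (hK : 1 ≤ K) (hC : 0 ≤ C) (hA : 0 ≤ A)
    (φ : X → X)
    (hφemb : ∀ a b : X, (1 / K) * dist a b - C ≤ dist (φ a) (φ b) ∧
      dist (φ a) (φ b) ≤ K * dist a b + C)
    (hφdense : ∃ D : ℝ, 0 ≤ D ∧ ∀ z : X, ∃ a : X, dist z (φ a) ≤ D)
    (hFib : ∀ x y : Xp,
      EMetric.hausdorffEdist (π ⁻¹' {x}) (π ⁻¹' {y}) = edist x y)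
    (hWhyte : ∀ x : Xp, ∃ y : Xp,
      EMetric.hausdorffEdist (φ '' (π ⁻¹' {x})) (π ⁻¹' {y}) ≤ ENNReal.ofReal A) :
    ∀ x₁ x₂ : Xp,
      (1 / K) * dist x₁ x₂ - (4 * K * A + K * C)
          ≤ dist (π (φ (σ x₁))) (π (φ (σ x₂))) ∧
        dist (π (φ (σ x₁))) (π (φ (σ x₂)))
          ≤ K * dist x₁ x₂ + (4 * K * A + K * C) := by
  intro x₁ x₂
  have hK0 : (0 : ℝ) < K := lt_of_lt_of_le one_pos hK
  have hmem : ∀ x : Xp, σ x ∈ π ⁻¹' {x} := fun x => by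
    simp [Set.mem_preimage, hsec x]
  have hne : ∀ x : Xp, (π ⁻¹' {x} : Set X).Nonempty := fun x => ⟨σ x, hmem x⟩
  have hD : dist (σ x₁) (σ x₂) = dist x₁ x₂ := hσ.dist_eq x₁ x₂
  set D := dist x₁ x₂ with hDdef
  constructor
  · -- lower bound
    obtain ⟨y₁, hy₁⟩ := hWhyte x₁
    obtain ⟨y₂, hy₂⟩ := hWhyte x₂
    have hfin₁ : EMetric.hausdorffEdist (φ '' (π ⁻¹' {x₁})) (π ⁻¹' {y₁}) ≠ ⊤ :=
      (lt_of_le_of_lt hy₁ ENNReal.ofReal_lt_top).ne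
    have hfin₂ : EMetric.hausdorffEdist (φ '' (π ⁻¹' {x₂})) (π ⁻¹' {y₂}) ≠ ⊤ :=
      (lt_of_le_of_lt hy₂ ENNReal.ofReal_lt_top).ne
    have hA₁ : Metric.hausdorffDist (φ '' (π ⁻¹' {x₁})) (π ⁻¹' {y₁}) ≤ A :=
      ENNReal.toReal_le_of_le_ofReal hA hy₁
    have hA₂ : Metric.hausdorffDist (φ '' (π ⁻¹' {x₂})) (π ⁻¹' {y₂}) ≤ A :=
      ENNReal.toReal_le_of_le_ofReal hA hy₂
    have hfy : Metric.hausdorffDist (π ⁻¹' {y₁}) (π ⁻¹' {y₂}) = dist y₁ y₂ := by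
      rw [Metric.hausdorffDist]; change (EMetric.hausdorffEdist (π ⁻¹' {y₁}) (π ⁻¹' {y₂})).toReal = _; rw [hFib, dist_edist]
    have hfyfin : EMetric.hausdorffEdist (π ⁻¹' {y₁} : Set X) (π ⁻¹' {y₂}) ≠ ⊤ := by
      rw [hFib]; exact edist_ne_top _ _
    -- distance from a fiber-x₁ point to fiber x₂ is at least D
    have hfar : ∀ b ∈ (π ⁻¹' {x₂} : Set X), D ≤ dist (σ x₁) b := by
      intro b hb
      have : π b = x₂ := hb
      calc D = dist (π (σ x₁)) (π b) := by rw [hsec x₁, this]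
        _ ≤ dist (σ x₁) b := hπ _ _
    -- infDist of φ(σ x₁) to φ(fiber x₂) is at least D/K - C
    have h1 : (1 / K) * D - C ≤ Metric.infDist (φ (σ x₁)) (φ '' (π ⁻¹' {x₂})) := by
      apply my_le_infDist ((hne x₂).image φ)
      rintro _ ⟨b, hb, rfl⟩
      have := (hφemb (σ x₁) b).1
      have hge : D ≤ dist (σ x₁) b := hfar b hb
      have : (1 / K) * D - C ≤ (1 / K) * dist (σ x₁) b - C := by
        have h1K : (0 : ℝ) < 1 / K := by positivity
        nlinarith
      linarith [(hφemb (σ x₁) b).1]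
    -- transfer to fiber y₂
    have h2 : (1 / K) * D - C - A ≤ Metric.infDist (φ (σ x₁)) (π ⁻¹' {y₂}) := by
      have hfin₂' : EMetric.hausdorffEdist (π ⁻¹' {y₂} : Set X) (φ '' (π ⁻¹' {x₂})) ≠ ⊤ := by
        change Metric.hausdorffEDist _ _ ≠ ⊤; rw [Metric.hausdorffEDist_comm]; exact hfin₂
      have hcomm : Metric.hausdorffDist (π ⁻¹' {y₂} : Set X) (φ '' (π ⁻¹' {x₂})) ≤ A := by
        rwa [Metric.hausdorffDist_comm]
      have := Metric.infDist_le_infDist_add_hausdorffDist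
        (x := φ (σ x₁)) (s := π ⁻¹' {y₂}) (t := φ '' (π ⁻¹' {x₂})) hfin₂'
      linarith
    -- now use an epsilon argument
    rw [sub_le_iff_le_add, ← sub_le_iff_le_add']
    apply le_of_forall_pos_le_add
    intro ε hε
    -- pick q₁ in fiber y₁ close to φ(σ x₁)
    have hclose₁ : Metric.infDist (φ (σ x₁)) (π ⁻¹' {y₁}) < A + ε / 3 := by
      have h := Metric.infDist_le_hausdorffDist_of_mem
        (Set.mem_image_of_mem φ (hmem x₁)) hfin₁
      linarith
    obtain ⟨q₁, hq₁mem, hq₁⟩ := (Metric.infDist_lt_iff (hne y₁)).1 hclose₁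
    have hclose₂ : Metric.infDist (φ (σ x₂)) (π ⁻¹' {y₂}) < A + ε / 3 := by
      have h := Metric.infDist_le_hausdorffDist_of_mem
        (Set.mem_image_of_mem φ (hmem x₂)) hfin₂
      linarith
    obtain ⟨q₂, hq₂mem, hq₂⟩ := (Metric.infDist_lt_iff (hne y₂)).1 hclose₂
    -- infDist of q₁ to fiber y₂
    have h3 : Metric.infDist (φ (σ x₁)) (π ⁻¹' {y₂}) ≤
        Metric.infDist q₁ (π ⁻¹' {y₂}) + dist (φ (σ x₁)) q₁ :=
      Metric.infDist_le_infDist_add_dist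
    have h4 : Metric.infDist q₁ (π ⁻¹' {y₂}) ≤ dist y₁ y₂ := by
      rw [← hfy]
      exact Metric.infDist_le_hausdorffDist_of_mem hq₁mem hfyfin
    -- dist between base points via π images
    have hπq₁ : π q₁ = y₁ := hq₁mem
    have hπq₂ : π q₂ = y₂ := hq₂mem
    have h5 : dist (π (φ (σ x₁))) y₁ ≤ dist (φ (σ x₁)) q₁ := by
      rw [← hπq₁]; exact hπ _ _
    have h6 : dist (π (φ (σ x₂))) y₂ ≤ dist (φ (σ x₂)) q₂ := by
      rw [← hπq₂]; exact hπ _ _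
    have htri : dist y₁ y₂ ≤ dist (π (φ (σ x₁))) y₁ + dist (π (φ (σ x₁))) (π (φ (σ x₂)))
        + dist (π (φ (σ x₂))) y₂ := by
      have t1 : dist y₁ y₂ ≤ dist y₁ (π (φ (σ x₂))) + dist (π (φ (σ x₂))) y₂ :=
        dist_triangle _ _ _
      have t2 : dist y₁ (π (φ (σ x₂))) ≤ dist y₁ (π (φ (σ x₁)))
          + dist (π (φ (σ x₁))) (π (φ (σ x₂))) := dist_triangle _ _ _
      rw [dist_comm y₁ (π (φ (σ x₁)))] at t2
      linarith
    have hAC : C + 4 * A ≤ 4 * K * A + K * C := by nlinarith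
    linarith
  · -- upper bound
    have h := (hφemb (σ x₁) (σ x₂)).2
    have h' := hπ (φ (σ x₁)) (φ (σ x₂))
    rw [hD] at h
    nlinarith
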